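/- Let B be a nonnegative real-valued random variable, and let K ≥ 0, η^I ≥ 0, η^T ≥ 0, ρ ≥ 0 with η^I + ρ > 0. Define f(b) = (η^I·K + η^T·(K − b)·P(B ≤ b)) / (η^I + ρ + η^T·P(B ≤ b)) for b ≥ 0. Then sup_{b ∈ [0, ρK/(η^I+ρ)]} f(b) = sup_{b ≥ 0} f(b); i.e., the search for an optimal constant bid can be restricted to the bounded interval [0, ρK/(η^I+ρ)]. -/

import Mathlib

open MeasureTheory

/-- In the purchase-based commercial advertising model with first-price
targeted auctions, the supremum of the gain `f` of constant bidding policies over the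
bounded interval `[0, ρK/(η^I+ρ)]` equals its supremum over `[0, ∞)`. -/
theorem purchase_based_optimal_bid_search_restriction
    {Ω : Type*} [MeasurableSpace Ω] (P : Measure Ω) [IsProbabilityMeasure P]
    (X : Ω → ℝ) (hX : Measurable X) (hX0 : ∀ ω, 0 ≤ X ω)
    (K ηI ηT ρ : ℝ) (hK : 0 ≤ K) (hηI : 0 ≤ ηI) (hηT : 0 ≤ ηT) (hρ : 0 ≤ ρ)
    (hpos : 0 < ηI + ρ)
    (f : ℝ → ℝ)
    (hf : ∀ b, f b = (ηI * K + ηT * (K - b) * (P {ω | X ω ≤ b}).toReal)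
                      / (ηI + ρ + ηT * (P {ω | X ω ≤ b}).toReal)) :
    sSup (f '' Set.Icc (0 : ℝ) (ρ * K / (ηI + ρ))) = sSup (f '' Set.Ici (0 : ℝ)) := by
  set bs := ρ * K / (ηI + ρ) with hbs
  have hbs0 : 0 ≤ bs := div_nonneg (mul_nonneg hρ hK) hpos.le
  have hp0 : ∀ b : ℝ, 0 ≤ (P {ω | X ω ≤ b}).toReal := fun b => ENNReal.toReal_nonneg
  have hden : ∀ b : ℝ, 0 < ηI + ρ + ηT * (P {ω | X ω ≤ b}).toReal := fun b => by
    nlinarith [hp0 b, mul_nonneg hηT (hp0 b)]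
  have hbsK : (ηI + ρ) * bs = ρ * K := by
    rw [hbs]; field_simp
  have hfK : ∀ b, 0 ≤ b → f b ≤ K := by
    intro b hb
    rw [hf, div_le_iff₀ (hden b)]
    nlinarith [hp0 b, mul_nonneg hηT (hp0 b),
      mul_nonneg (mul_nonneg hηT (hp0 b)) hb, mul_nonneg hρ hK]
  have hfbs : f bs = ηI * K / (ηI + ρ) := by
    rw [hf, div_eq_div_iff (hden bs).ne' hpos.ne']
    linear_combination (-(ηT * (P {ω | X ω ≤ bs}).toReal)) * hbsK
  have key : ∀ b, bs ≤ b → f b ≤ f bs := by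
    intro b hb
    rw [hfbs, hf, div_le_div_iff₀ (hden b) hpos]
    have h1 : ρ * K ≤ (ηI + ρ) * b := by
      rw [← hbsK]; exact mul_le_mul_of_nonneg_left hb hpos.le
    nlinarith [mul_nonneg hηT (hp0 b), h1]
  have hbddI : BddAbove (f '' Set.Ici (0 : ℝ)) := by
    refine ⟨K, ?_⟩
    rintro y ⟨b, hb, rfl⟩
    exact hfK b hb
  have hbddC : BddAbove (f '' Set.Icc (0 : ℝ) bs) := by
    refine ⟨K, ?_⟩
    rintro y ⟨b, hb, rfl⟩
    exact hfK b hb.1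
  apply le_antisymm
  · exact csSup_le_csSup hbddI ⟨f 0, ⟨0, ⟨le_refl 0, hbs0⟩, rfl⟩⟩
      (Set.image_mono (f := f) Set.Icc_subset_Ici_self)
  · refine csSup_le ⟨f 0, 0, Set.self_mem_Ici, rfl⟩ ?_
    rintro y ⟨b, hb, rfl⟩
    by_cases h : b ≤ bs
    · exact le_csSup hbddC ⟨b, ⟨hb, h⟩, rfl⟩
    · exact (key b (le_of_not_ge h)).trans
        (le_csSup hbddC ⟨bs, ⟨hbs0, le_refl bs⟩, rfl⟩)
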